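/- Let p̂ : {0,1}^5 → ℝ be the joint distribution of (X, Z, Y, S, T) induced by some full SCM. Then the set of values of PNS = P(Y_{X=1} = 1 and Y_{X=0} = 0) attained by full SCMs whose induced joint distribution of (X, Z, Y, S, T) equals p̂ is equal to the set of values of PNS attained by reduced SCMs whose parameter γ equals the p̂-probability of {S = 1} and whose induced joint distribution of (X, Z, Y, S) equals the corresponding marginal of p̂. In particular, the tight lower and upper bounds on PNS computed over the full models coincide with those computed over the reduced models. -/
import Mathlib


open Finset

attribute [local instance] Classical.propDecidable

/-- A reduced SCM as in the paper (with its exogenous types bundled):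
exogenous `U1`, `U2`, a parameter `γ` for the binary pre-treatment variable
`S`, and mechanisms `fX`, `fZ`, `fY`. -/
structure ReducedSCM where
  U1 : Type
  U2 : Type
  [fin1 : Fintype U1]
  [fin2 : Fintype U2]
  p1 : U1 → ℝ
  p2 : U2 → ℝ
  gamma : ℝ
  p1_nonneg : ∀ u, 0 ≤ p1 u
  p2_nonneg : ∀ u, 0 ≤ p2 u
  p1_sum : ∑ u, p1 u = 1
  p2_sum : ∑ u, p2 u = 1
  gamma_nonneg : 0 ≤ gamma
  gamma_le_one : gamma ≤ 1
  fX : U1 → Bool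
  fZ : Bool → Bool → U2 → Bool
  fY : Bool → U1 → Bool

attribute [instance] ReducedSCM.fin1 ReducedSCM.fin2

namespace ReducedSCM

/-- Probability of a unit `(u1, u2, s)`. -/
def w (M : ReducedSCM) (u : M.U1 × M.U2 × Bool) : ℝ :=
  M.p1 u.1 * M.p2 u.2.1 * (if u.2.2 then M.gamma else 1 - M.gamma)

/-- Probability of an event. -/
noncomputable def P (M : ReducedSCM) (E : M.U1 × M.U2 × Bool → Prop) : ℝ :=
  ∑ u, if E u then M.w u else 0

def S (M : ReducedSCM) (u : M.U1 × M.U2 × Bool) : Bool := u.2.2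

def X (M : ReducedSCM) (u : M.U1 × M.U2 × Bool) : Bool := M.fX u.1

def Z (M : ReducedSCM) (u : M.U1 × M.U2 × Bool) : Bool := M.fZ (M.S u) (M.X u) u.2.1

def Y (M : ReducedSCM) (u : M.U1 × M.U2 × Bool) : Bool := M.fY (M.Z u) u.1

/-- Potential outcome `Y_{X=x}`. -/
def Yx (M : ReducedSCM) (x : Bool) (u : M.U1 × M.U2 × Bool) : Bool :=
  M.fY (M.fZ (M.S u) x u.2.1) u.1

/-- Probability of necessity `PN = P(Y_{X=0} = 0, X = 1, Y = 1) / P(X = 1, Y = 1)`. -/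
noncomputable def PN (M : ReducedSCM) : ℝ :=
  M.P (fun u => M.Yx false u = false ∧ M.X u = true ∧ M.Y u = true)
    / M.P (fun u => M.X u = true ∧ M.Y u = true)

/-- Probability of necessity and sufficiency `PNS = P(Y_{X=1} = 1, Y_{X=0} = 0)`. -/
noncomputable def PNS (M : ReducedSCM) : ℝ :=
  M.P (fun u => M.Yx true u = true ∧ M.Yx false u = false)

end ReducedSCM

/-- A full SCM as in the paper (with its exogenous types bundled): exogenous
`U1`, `U2`, `U5`, `U6` and mechanisms `fT`, `fS`, `fX`, `fZ`, `fY`. -/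
structure FullSCM where
  U1 : Type
  U2 : Type
  U5 : Type
  U6 : Type
  [fin1 : Fintype U1]
  [fin2 : Fintype U2]
  [fin5 : Fintype U5]
  [fin6 : Fintype U6]
  p1 : U1 → ℝ
  p2 : U2 → ℝ
  p5 : U5 → ℝ
  p6 : U6 → ℝ
  p1_nonneg : ∀ u, 0 ≤ p1 u
  p2_nonneg : ∀ u, 0 ≤ p2 u
  p5_nonneg : ∀ u, 0 ≤ p5 u
  p6_nonneg : ∀ u, 0 ≤ p6 u
  p1_sum : ∑ u, p1 u = 1
  p2_sum : ∑ u, p2 u = 1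
  p5_sum : ∑ u, p5 u = 1
  p6_sum : ∑ u, p6 u = 1
  fT : U6 → Bool
  fS : Bool → U5 → Bool
  fX : U1 → Bool
  fZ : Bool → Bool → U2 → Bool
  fY : Bool → U1 → Bool

attribute [instance] FullSCM.fin1 FullSCM.fin2 FullSCM.fin5 FullSCM.fin6

namespace FullSCM

/-- Probability of a unit `(u1, u2, u5, u6)`. -/
def w (M : FullSCM) (u : M.U1 × M.U2 × M.U5 × M.U6) : ℝ :=
  M.p1 u.1 * M.p2 u.2.1 * M.p5 u.2.2.1 * M.p6 u.2.2.2

/-- Probability of an event. -/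
noncomputable def P (M : FullSCM) (E : M.U1 × M.U2 × M.U5 × M.U6 → Prop) : ℝ :=
  ∑ u, if E u then M.w u else 0

def T (M : FullSCM) (u : M.U1 × M.U2 × M.U5 × M.U6) : Bool := M.fT u.2.2.2

def S (M : FullSCM) (u : M.U1 × M.U2 × M.U5 × M.U6) : Bool := M.fS (M.T u) u.2.2.1

def X (M : FullSCM) (u : M.U1 × M.U2 × M.U5 × M.U6) : Bool := M.fX u.1

def Z (M : FullSCM) (u : M.U1 × M.U2 × M.U5 × M.U6) : Bool :=
  M.fZ (M.S u) (M.X u) u.2.1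

def Y (M : FullSCM) (u : M.U1 × M.U2 × M.U5 × M.U6) : Bool := M.fY (M.Z u) u.1

/-- Potential outcome `Y_{X=x}`. -/
def Yx (M : FullSCM) (x : Bool) (u : M.U1 × M.U2 × M.U5 × M.U6) : Bool :=
  M.fY (M.fZ (M.S u) x u.2.1) u.1

/-- Probability of necessity `PN = P(Y_{X=0} = 0, X = 1, Y = 1) / P(X = 1, Y = 1)`. -/
noncomputable def PN (M : FullSCM) : ℝ :=
  M.P (fun u => M.Yx false u = false ∧ M.X u = true ∧ M.Y u = true)
    / M.P (fun u => M.X u = true ∧ M.Y u = true)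

/-- Probability of necessity and sufficiency `PNS = P(Y_{X=1} = 1, Y_{X=0} = 0)`. -/
noncomputable def PNS (M : FullSCM) : ℝ :=
  M.P (fun u => M.Yx true u = true ∧ M.Yx false u = false)

end FullSCM

/-- Probability that a distribution `p̂` on `(x, z, y, s, t) ∈ {0,1}^5` assigns
to an event. -/
noncomputable def phatP (phat : Bool × Bool × Bool × Bool × Bool → ℝ)
    (E : Bool × Bool × Bool × Bool × Bool → Prop) : ℝ :=
  ∑ v, if E v then phat v else 0

/-- A full SCM induces `p̂` as the joint distribution of `(X, Z, Y, S, T)`. -/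
def FullSCM.induces (M : FullSCM)
    (phat : Bool × Bool × Bool × Bool × Bool → ℝ) : Prop :=
  ∀ x z y s t : Bool,
    M.P (fun u => M.X u = x ∧ M.Z u = z ∧ M.Y u = y ∧ M.S u = s ∧ M.T u = t)
      = phat (x, z, y, s, t)

/-- A reduced SCM induces the `(X, Z, Y, S)`-marginal of `p̂` as the joint
distribution of `(X, Z, Y, S)`. -/
def ReducedSCM.inducesMarginal (M : ReducedSCM)
    (phat : Bool × Bool × Bool × Bool × Bool → ℝ) : Prop :=
  ∀ x z y s : Bool,
    M.P (fun u => M.X u = x ∧ M.Z u = z ∧ M.Y u = y ∧ M.S u = s)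
      = ∑ t : Bool, phat (x, z, y, s, t)

section AuxLemmas

lemma if_and_mul' {A B : Prop} (a b : ℝ) :
    (if A ∧ B then a * b else 0) = (if A then a else 0) * (if B then b else 0) := by
  split_ifs with h h1 h2 <;> simp_all

lemma quad_factor' {α β γ δ : Type} [Fintype α] [Fintype β] [Fintype γ] [Fintype δ]
    (A : α → β → Prop) (B : γ → δ → Prop) (f : α → ℝ) (g : β → ℝ) (h : γ → ℝ) (k : δ → ℝ) :
    (∑ a, ∑ b, ∑ c, ∑ d, if A a b ∧ B c d then f a * g b * h c * k d else 0)
      = (∑ a, ∑ b, if A a b then f a * g b else 0)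
        * (∑ c, ∑ d, if B c d then h c * k d else 0) := by
  rw [Finset.sum_mul_sum]
  refine Finset.sum_congr rfl fun a _ => ?_
  rw [Finset.sum_comm]
  refine Finset.sum_congr rfl fun c _ => ?_
  rw [Finset.sum_mul_sum]
  refine Finset.sum_congr rfl fun b _ => Finset.sum_congr rfl fun d _ => ?_
  rw [if_and_mul']
  split_ifs <;> ring

lemma sum_pick' {κ : Type} [Fintype κ] (E : κ → Prop) (c : ℝ) (a : κ) :
    (∑ v, if E v then (if a = v then c else 0) else 0) = if E a then c else 0 := by
  rw [Finset.sum_eq_single a]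
  · split_ifs <;> simp_all
  · intro b _ hb
    split_ifs with h1 h2
    · exact absurd h2.symm hb
    · rfl
    · rfl
  · simp

/-- The `(u1, u2)`-part of a joint probability, given `S = s`. -/
noncomputable def rfun {U1 U2 : Type} [Fintype U1] [Fintype U2] (p1 : U1 → ℝ) (p2 : U2 → ℝ)
    (fX : U1 → Bool) (fZ : Bool → Bool → U2 → Bool) (fY : Bool → U1 → Bool)
    (x z y s : Bool) : ℝ :=
  ∑ u1, ∑ u2, @ite ℝ (fX u1 = x ∧ fZ s x u2 = z ∧ fY z u1 = y)
    (Classical.propDecidable _) (p1 u1 * p2 u2) 0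

/-- The `(u1, u2)`-part of the PNS, given `S = s`. -/
noncomputable def pnsfun {U1 U2 : Type} [Fintype U1] [Fintype U2] (p1 : U1 → ℝ) (p2 : U2 → ℝ)
    (fZ : Bool → Bool → U2 → Bool) (fY : Bool → U1 → Bool) (s : Bool) : ℝ :=
  ∑ u1, ∑ u2, @ite ℝ (fY (fZ s true u2) u1 = true ∧ fY (fZ s false u2) u1 = false)
    (Classical.propDecidable _) (p1 u1 * p2 u2) 0

end AuxLemmas

namespace FullSCM

variable (M : FullSCM)

lemma P_congr {E E' : M.U1 × M.U2 × M.U5 × M.U6 → Prop} (h : ∀ u, E u ↔ E' u) :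
    M.P E = M.P E' :=
  Finset.sum_congr rfl fun u _ => by rw [if_congr (h u) rfl rfl]

lemma P_nonneg (E : M.U1 × M.U2 × M.U5 × M.U6 → Prop) : 0 ≤ M.P E := by
  refine Finset.sum_nonneg fun u _ => ?_
  split_ifs
  · exact mul_nonneg (mul_nonneg (mul_nonneg (M.p1_nonneg _) (M.p2_nonneg _))
      (M.p5_nonneg _)) (M.p6_nonneg _)
  · exact le_refl 0

noncomputable def qST (s t : Bool) : ℝ :=
  ∑ u5, ∑ u6, @ite ℝ (M.fS (M.fT u6) u5 = s ∧ M.fT u6 = t)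
    (Classical.propDecidable _) (M.p5 u5 * M.p6 u6) 0

noncomputable def qS (s : Bool) : ℝ :=
  ∑ u5, ∑ u6, @ite ℝ (M.fS (M.fT u6) u5 = s)
    (Classical.propDecidable _) (M.p5 u5 * M.p6 u6) 0

lemma qST_nonneg (s t : Bool) : 0 ≤ M.qST s t := by
  refine Finset.sum_nonneg fun u5 _ => Finset.sum_nonneg fun u6 _ => ?_
  split_ifs
  · exact mul_nonneg (M.p5_nonneg _) (M.p6_nonneg _)
  · exact le_refl 0

lemma qS_nonneg (s : Bool) : 0 ≤ M.qS s := by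
  refine Finset.sum_nonneg fun u5 _ => Finset.sum_nonneg fun u6 _ => ?_
  split_ifs
  · exact mul_nonneg (M.p5_nonneg _) (M.p6_nonneg _)
  · exact le_refl 0

lemma qST_sum (s : Bool) : M.qST s true + M.qST s false = M.qS s := by
  unfold qST qS
  rw [← Finset.sum_add_distrib]
  refine Finset.sum_congr rfl fun u5 _ => ?_
  rw [← Finset.sum_add_distrib]
  refine Finset.sum_congr rfl fun u6 _ => ?_
  cases h : M.fT u6 <;> split_ifs <;> simp_all

lemma qS_sum : M.qS true + M.qS false = 1 := by
  unfold qS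
  rw [← Finset.sum_add_distrib]
  have : ∀ u5 : M.U5, ((∑ u6, @ite ℝ (M.fS (M.fT u6) u5 = true)
        (Classical.propDecidable _) (M.p5 u5 * M.p6 u6) 0)
      + ∑ u6, @ite ℝ (M.fS (M.fT u6) u5 = false)
        (Classical.propDecidable _) (M.p5 u5 * M.p6 u6) 0)
      = ∑ u6, M.p5 u5 * M.p6 u6 := by
    intro u5
    rw [← Finset.sum_add_distrib]
    refine Finset.sum_congr rfl fun u6 _ => ?_
    cases h : M.fS (M.fT u6) u5 <;> simp [h]
  simp only [this]
  rw [← Finset.sum_mul_sum, M.p5_sum, M.p6_sum, one_mul]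

lemma P_factor (A : M.U1 → M.U2 → Prop) (B : M.U5 → M.U6 → Prop) :
    M.P (fun u => A u.1 u.2.1 ∧ B u.2.2.1 u.2.2.2)
      = (∑ u1, ∑ u2, if A u1 u2 then M.p1 u1 * M.p2 u2 else 0)
        * (∑ u5, ∑ u6, if B u5 u6 then M.p5 u5 * M.p6 u6 else 0) := by
  unfold P w
  simp only [Fintype.sum_prod_type]
  exact quad_factor' A B M.p1 M.p2 M.p5 M.p6

lemma P_joint (x z y s t : Bool) :
    M.P (fun u => M.X u = x ∧ M.Z u = z ∧ M.Y u = y ∧ M.S u = s ∧ M.T u = t)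
      = rfun M.p1 M.p2 M.fX M.fZ M.fY x z y s * M.qST s t := by
  rw [M.P_congr (E' := fun u => (M.fX u.1 = x ∧ M.fZ s x u.2.1 = z ∧ M.fY z u.1 = y)
      ∧ (M.fS (M.fT u.2.2.2) u.2.2.1 = s ∧ M.fT u.2.2.2 = t)) ?_]
  · unfold rfun qST
    exact M.P_factor (fun u1 u2 => M.fX u1 = x ∧ M.fZ s x u2 = z ∧ M.fY z u1 = y)
      (fun u5 u6 => M.fS (M.fT u6) u5 = s ∧ M.fT u6 = t)
  · intro u
    simp only [X, Z, Y, S, T]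
    constructor
    · rintro ⟨hx, hz, hy, hs, ht⟩
      subst hx; subst hs; subst ht; subst hz; subst hy
      exact ⟨⟨rfl, rfl, rfl⟩, rfl, rfl⟩
    · rintro ⟨⟨hx, hz, hy⟩, hs, ht⟩
      subst hx; subst hs; subst ht; subst hz; subst hy
      exact ⟨rfl, rfl, rfl, rfl, rfl⟩

lemma P_split (E : M.U1 × M.U2 × M.U5 × M.U6 → Prop) :
    M.P E = M.P (fun u => E u ∧ M.S u = true) + M.P (fun u => E u ∧ M.S u = false) := by
  unfold P
  rw [← Finset.sum_add_distrib]
  refine Finset.sum_congr rfl fun u _ => ?_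
  by_cases hE : E u <;> cases hS : M.S u <;> simp [hE, hS]

lemma P_PNS_part (s : Bool) :
    M.P (fun u => (M.Yx true u = true ∧ M.Yx false u = false) ∧ M.S u = s)
      = pnsfun M.p1 M.p2 M.fZ M.fY s * M.qS s := by
  rw [M.P_congr (E' := fun u => (M.fY (M.fZ s true u.2.1) u.1 = true
      ∧ M.fY (M.fZ s false u.2.1) u.1 = false) ∧ (M.fS (M.fT u.2.2.2) u.2.2.1 = s)) ?_]
  · unfold pnsfun qS
    exact M.P_factor (fun u1 u2 => M.fY (M.fZ s true u2) u1 = true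
        ∧ M.fY (M.fZ s false u2) u1 = false)
      (fun u5 u6 => M.fS (M.fT u6) u5 = s)
  · intro u
    simp only [Yx, S]
    constructor
    · rintro ⟨⟨h1, h2⟩, hs⟩
      subst hs
      exact ⟨⟨h1, h2⟩, rfl⟩
    · rintro ⟨⟨h1, h2⟩, hs⟩
      subst hs
      exact ⟨⟨h1, h2⟩, rfl⟩

lemma PNS_eq : M.PNS = pnsfun M.p1 M.p2 M.fZ M.fY true * M.qS true
    + pnsfun M.p1 M.p2 M.fZ M.fY false * M.qS false := by
  unfold PNS
  rw [M.P_split, M.P_PNS_part true, M.P_PNS_part false]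

lemma P_S (s : Bool) : M.P (fun u => M.S u = s) = M.qS s := by
  rw [M.P_congr (E' := fun u => True ∧ (M.fS (M.fT u.2.2.2) u.2.2.1 = s))
      (fun u => by simp [S, T])]
  rw [M.P_factor (fun _ _ => True) (fun u5 u6 => M.fS (M.fT u6) u5 = s)]
  simp only [if_true]
  rw [← Finset.sum_mul_sum, M.p1_sum, M.p2_sum, one_mul, one_mul]
  rfl

lemma induces_phatP {phat : Bool × Bool × Bool × Bool × Bool → ℝ} (h : M.induces phat)
    (E : Bool × Bool × Bool × Bool × Bool → Prop) :
    phatP phat E = M.P (fun u => E (M.X u, M.Z u, M.Y u, M.S u, M.T u)) := by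
  have hv : ∀ v, phat v = M.P (fun u => (M.X u, M.Z u, M.Y u, M.S u, M.T u) = v) := by
    rintro ⟨x, z, y, s, t⟩
    rw [← h x z y s t]
    exact (M.P_congr fun u => by simp [Prod.ext_iff, and_assoc]).symm
  unfold phatP
  have step : ∀ v, (if E v then phat v else 0)
      = ∑ u, if E v then (@ite ℝ ((M.X u, M.Z u, M.Y u, M.S u, M.T u) = v)
          (Classical.propDecidable _) (M.w u) 0) else 0 := by
    intro v
    by_cases hE : E v
    · rw [if_pos hE, hv v]
      unfold P
      exact Finset.sum_congr rfl fun u _ => by rw [if_pos hE]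
    · rw [if_neg hE]
      simp [hE]
  rw [Finset.sum_congr rfl fun v _ => step v, Finset.sum_comm]
  exact Finset.sum_congr rfl fun u _ => sum_pick' E (M.w u) _

end FullSCM
lemma FullSCM.qST_zero (M : FullSCM) {s : Bool} (h : M.qS s = 0) (t : Bool) :
    M.qST s t = 0 := by
  have h1 := M.qST_nonneg s true
  have h2 := M.qST_nonneg s false
  have h3 := M.qST_sum s
  cases t <;> linarith

namespace ReducedSCM

variable (M : ReducedSCM)

lemma P_congr {E E' : M.U1 × M.U2 × Bool → Prop} (h : ∀ u, E u ↔ E' u) :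
    M.P E = M.P E' :=
  Finset.sum_congr rfl fun u _ => by rw [if_congr (h u) rfl rfl]

lemma P_factor (A : M.U1 → M.U2 → Prop) (s0 : Bool) :
    M.P (fun u => A u.1 u.2.1 ∧ u.2.2 = s0)
      = (∑ u1, ∑ u2, @ite ℝ (A u1 u2) (Classical.propDecidable _) (M.p1 u1 * M.p2 u2) 0)
        * (if s0 then M.gamma else 1 - M.gamma) := by
  unfold P w
  simp only [Fintype.sum_prod_type]
  rw [Finset.sum_mul]
  refine Finset.sum_congr rfl fun u1 _ => ?_
  rw [Finset.sum_mul]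
  refine Finset.sum_congr rfl fun u2 _ => ?_
  rw [Fintype.sum_bool]
  by_cases h : A u1 u2 <;> cases s0 <;> simp [h]

lemma P_joint (x z y s : Bool) :
    M.P (fun u => M.X u = x ∧ M.Z u = z ∧ M.Y u = y ∧ M.S u = s)
      = rfun M.p1 M.p2 M.fX M.fZ M.fY x z y s * (if s then M.gamma else 1 - M.gamma) := by
  rw [M.P_congr (E' := fun u => (M.fX u.1 = x ∧ M.fZ s x u.2.1 = z ∧ M.fY z u.1 = y)
      ∧ u.2.2 = s) ?_]
  · unfold rfun
    exact M.P_factor (fun u1 u2 => M.fX u1 = x ∧ M.fZ s x u2 = z ∧ M.fY z u1 = y) s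
  · intro u
    simp only [X, Z, Y, S]
    constructor
    · rintro ⟨hx, hz, hy, hs⟩
      subst hx; subst hs; subst hz; subst hy
      exact ⟨⟨rfl, rfl, rfl⟩, rfl⟩
    · rintro ⟨⟨hx, hz, hy⟩, hs⟩
      subst hx; subst hs; subst hz; subst hy
      exact ⟨rfl, rfl, rfl, rfl⟩

lemma P_split (E : M.U1 × M.U2 × Bool → Prop) :
    M.P E = M.P (fun u => E u ∧ u.2.2 = true) + M.P (fun u => E u ∧ u.2.2 = false) := by
  unfold P
  rw [← Finset.sum_add_distrib]
  refine Finset.sum_congr rfl fun u _ => ?_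
  by_cases hE : E u <;> cases hS : u.2.2 <;> simp [hE, hS]

lemma P_PNS_part (s : Bool) :
    M.P (fun u => (M.Yx true u = true ∧ M.Yx false u = false) ∧ u.2.2 = s)
      = pnsfun M.p1 M.p2 M.fZ M.fY s * (if s then M.gamma else 1 - M.gamma) := by
  rw [M.P_congr (E' := fun u => (M.fY (M.fZ s true u.2.1) u.1 = true
      ∧ M.fY (M.fZ s false u.2.1) u.1 = false) ∧ u.2.2 = s) ?_]
  · unfold pnsfun
    exact M.P_factor (fun u1 u2 => M.fY (M.fZ s true u2) u1 = true
      ∧ M.fY (M.fZ s false u2) u1 = false) s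
  · intro u
    simp only [Yx, S]
    constructor
    · rintro ⟨⟨h1, h2⟩, hs⟩
      subst hs
      exact ⟨⟨h1, h2⟩, rfl⟩
    · rintro ⟨⟨h1, h2⟩, hs⟩
      subst hs
      exact ⟨⟨h1, h2⟩, rfl⟩

lemma PNS_eq : M.PNS = pnsfun M.p1 M.p2 M.fZ M.fY true * M.gamma
    + pnsfun M.p1 M.p2 M.fZ M.fY false * (1 - M.gamma) := by
  unfold PNS
  rw [M.P_split, M.P_PNS_part true, M.P_PNS_part false]
  simp

end ReducedSCM

/-- Reduction of a full SCM to a reduced SCM with `γ = P(S = 1)`. -/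
noncomputable def FullSCM.toReduced (M : FullSCM) : ReducedSCM where
  U1 := M.U1
  U2 := M.U2
  p1 := M.p1
  p2 := M.p2
  gamma := M.qS true
  p1_nonneg := M.p1_nonneg
  p2_nonneg := M.p2_nonneg
  p1_sum := M.p1_sum
  p2_sum := M.p2_sum
  gamma_nonneg := M.qS_nonneg true
  gamma_le_one := by
    have h1 := M.qS_sum
    have h2 := M.qS_nonneg false
    linarith
  fX := M.fX
  fZ := M.fZ
  fY := M.fY

/-- Expansion of a reduced SCM to a full SCM, borrowing the `(S, T)`-part
from a given full SCM. -/
def mkFull (M' : ReducedSCM) (M0 : FullSCM) : FullSCM where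
  U1 := M'.U1
  U2 := M'.U2
  U5 := M0.U5
  U6 := M0.U6
  p1 := M'.p1
  p2 := M'.p2
  p5 := M0.p5
  p6 := M0.p6
  p1_nonneg := M'.p1_nonneg
  p2_nonneg := M'.p2_nonneg
  p5_nonneg := M0.p5_nonneg
  p6_nonneg := M0.p6_nonneg
  p1_sum := M'.p1_sum
  p2_sum := M'.p2_sum
  p5_sum := M0.p5_sum
  p6_sum := M0.p6_sum
  fT := M0.fT
  fS := M0.fS
  fX := M'.fX
  fZ := M'.fZ
  fY := M'.fY
/-- If `p̂` is the joint distribution of `(X, Z, Y, S, T)` of some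
full SCM, then the set of PNS values attained by full SCMs inducing `p̂` equals
the set of PNS values attained by reduced SCMs whose `γ` is `p̂(S = 1)` and
whose `(X, Z, Y, S)`-distribution is the marginal of `p̂`. -/
theorem PNS_values_full_eq_reduced
    (phat : Bool × Bool × Bool × Bool × Bool → ℝ)
    (hind : ∃ M0 : FullSCM, M0.induces phat) :
    {r : ℝ | ∃ M : FullSCM, M.induces phat ∧ M.PNS = r}
      = {r : ℝ | ∃ M' : ReducedSCM,
          M'.gamma = phatP phat (fun v => v.2.2.2.1 = true) ∧
          M'.inducesMarginal phat ∧ M'.PNS = r} := by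
  ext r
  simp only [Set.mem_setOf_eq]
  constructor
  · rintro ⟨M, hMind, rfl⟩
    have hph : ∀ x z y s t : Bool, phat (x, z, y, s, t)
        = rfun M.p1 M.p2 M.fX M.fZ M.fY x z y s * M.qST s t := fun x z y s t => by
      rw [← hMind x z y s t, M.P_joint]
    refine ⟨M.toReduced, ?_, ?_, ?_⟩
    · rw [M.induces_phatP hMind]
      exact (M.P_S true).symm
    · intro x z y s
      rw [ReducedSCM.P_joint]
      show rfun M.p1 M.p2 M.fX M.fZ M.fY x z y s * (if s then M.qS true else 1 - M.qS true)
        = ∑ t : Bool, phat (x, z, y, s, t)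
      have hqs : (if s then M.qS true else 1 - M.qS true) = M.qS s := by
        have := M.qS_sum
        cases s <;> simp <;> linarith
      rw [hqs, Fintype.sum_bool, hph x z y s true, hph x z y s false, ← mul_add, M.qST_sum]
    · rw [ReducedSCM.PNS_eq, M.PNS_eq]
      show pnsfun M.p1 M.p2 M.fZ M.fY true * M.qS true
          + pnsfun M.p1 M.p2 M.fZ M.fY false * (1 - M.qS true)
        = pnsfun M.p1 M.p2 M.fZ M.fY true * M.qS true
          + pnsfun M.p1 M.p2 M.fZ M.fY false * M.qS false
      rw [show (1 : ℝ) - M.qS true = M.qS false from by linarith [M.qS_sum]]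
  · rintro ⟨M', hγ, hmarg, rfl⟩
    obtain ⟨M0, h0⟩ := hind
    have hγ0 : M'.gamma = M0.qS true := by
      rw [hγ, M0.induces_phatP h0]
      exact M0.P_S true
    have hγ1 : 1 - M'.gamma = M0.qS false := by
      have := M0.qS_sum
      linarith
    have hph : ∀ x z y s t : Bool, phat (x, z, y, s, t)
        = rfun M0.p1 M0.p2 M0.fX M0.fZ M0.fY x z y s * M0.qST s t := fun x z y s t => by
      rw [← h0 x z y s t, M0.P_joint]
    have hkey : ∀ x z y s : Bool,
        rfun M'.p1 M'.p2 M'.fX M'.fZ M'.fY x z y s * M0.qS s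
          = rfun M0.p1 M0.p2 M0.fX M0.fZ M0.fY x z y s * M0.qS s := by
      intro x z y s
      have h1 := hmarg x z y s
      rw [M'.P_joint] at h1
      have hgs : (if s then M'.gamma else 1 - M'.gamma) = M0.qS s := by
        cases s
        · simpa using hγ1
        · simpa using hγ0
      rw [hgs] at h1
      rw [h1, Fintype.sum_bool, hph x z y s true, hph x z y s false, ← mul_add, M0.qST_sum]
    have hkey2 : ∀ x z y s t : Bool,
        rfun M'.p1 M'.p2 M'.fX M'.fZ M'.fY x z y s * M0.qST s t
          = rfun M0.p1 M0.p2 M0.fX M0.fZ M0.fY x z y s * M0.qST s t := by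
      intro x z y s t
      by_cases h : M0.qS s = 0
      · rw [M0.qST_zero h t, mul_zero, mul_zero]
      · rw [mul_right_cancel₀ h (hkey x z y s)]
    refine ⟨mkFull M' M0, ?_, ?_⟩
    · intro x z y s t
      rw [FullSCM.P_joint]
      show rfun M'.p1 M'.p2 M'.fX M'.fZ M'.fY x z y s * M0.qST s t = phat (x, z, y, s, t)
      rw [hkey2 x z y s t, hph x z y s t]
    · rw [FullSCM.PNS_eq, ReducedSCM.PNS_eq]
      show pnsfun M'.p1 M'.p2 M'.fZ M'.fY true * M0.qS true
          + pnsfun M'.p1 M'.p2 M'.fZ M'.fY false * M0.qS false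
        = pnsfun M'.p1 M'.p2 M'.fZ M'.fY true * M'.gamma
          + pnsfun M'.p1 M'.p2 M'.fZ M'.fY false * (1 - M'.gamma)
      rw [hγ1, hγ0]
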